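/- arXiv:0809.4399 — 3 statements merged into one kernel-verified Lean document; each statement's English description precedes it below -/
import Mathlib

section
/- Let X=(V,E) be a finite simple connected tree with n ≥ 3 vertices (i.e. X is connected and |E| = n − 1). Then the edge-flipping group W_E(X) is isomorphic to the symmetric group S_n of degree n. -/
open scoped Classical

noncomputable section

variable {V : Type*}

/-- The indicator (over `F₂`) of whether a `Sym2` element has exactly one endpoint in `U`. -/
def edgeCutFun (U : Set V) : Sym2 V → ZMod 2 :=
  Sym2.lift ⟨fun x y => (if x ∈ U then 1 else 0) + (if y ∈ U then 1 else 0),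
    fun _ _ => add_comm _ _⟩

/-- The edge cut `E(U)`, as an element of the edge space `𝓔 = (X.edgeSet → ZMod 2)`. -/
def edgeCut (X : SimpleGraph V) (U : Set V) : X.edgeSet → ZMod 2 :=
  fun e => edgeCutFun U e.1

/-- The bond space `𝓑`, the span of the vertex edge cuts. -/
def bondSpace (X : SimpleGraph V) : Submodule (ZMod 2) (X.edgeSet → ZMod 2) :=
  Submodule.span (ZMod 2) (Set.range fun v => edgeCut X {v})

lemma edgeCut_single_mem_bondSpace (X : SimpleGraph V) (v : V) :
    edgeCut X {v} ∈ bondSpace X :=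
  Submodule.subset_span ⟨v, rfl⟩

/-- generic flip: `G ↦ G + G i • C`, a linear endomorphism of `ι → ZMod 2`. -/
def flipLin {ι : Type*} (i : ι) (C : ι → ZMod 2) :
    (ι → ZMod 2) →ₗ[ZMod 2] (ι → ZMod 2) where
  toFun G := G + G i • C
  map_add' G H := by
    funext f
    simp only [Pi.add_apply, Pi.smul_apply, smul_eq_mul]
    ring
  map_smul' c G := by
    funext f
    simp only [Pi.add_apply, Pi.smul_apply, smul_eq_mul, RingHom.id_apply]
    ring

lemma flipLin_flipLin {ι : Type*} (i : ι) (C : ι → ZMod 2) (hC : C i = 0)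
    (G : ι → ZMod 2) : flipLin i C (flipLin i C G) = G := by
  funext f
  have h2 : (2 : ZMod 2) = 0 := by decide
  simp only [flipLin, LinearMap.coe_mk, AddHom.coe_mk, Pi.add_apply, Pi.smul_apply,
    smul_eq_mul, hC, mul_zero, add_zero]
  ring_nf
  rw [h2, mul_zero, add_zero]

/-- generic flip as a unit of the endomorphism ring (element of `GL`). -/
def flipGL {ι : Type*} (i : ι) (C : ι → ZMod 2) (hC : C i = 0) :
    ((ι → ZMod 2) →ₗ[ZMod 2] (ι → ZMod 2))ˣ where
  val := flipLin i C
  inv := flipLin i C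
  val_inv := LinearMap.ext fun G => flipLin_flipLin i C hC G
  inv_val := LinearMap.ext fun G => flipLin_flipLin i C hC G

lemma edgeCutFun_self (e : Sym2 V) : edgeCutFun {v | v ∈ e} e = 0 := by
  induction e using Sym2.ind with
  | _ x y =>
    simp [edgeCutFun, Sym2.mem_iff]
    decide

/-- The move `ρ_ε` of the edge-flipping puzzle, as an element of `GL(𝓔)`. -/
def edgeFlip (X : SimpleGraph V) (ε : X.edgeSet) :
    ((X.edgeSet → ZMod 2) →ₗ[ZMod 2] (X.edgeSet → ZMod 2))ˣ :=
  flipGL ε (edgeCut X {v | v ∈ (ε : Sym2 V)}) (edgeCutFun_self ε.1)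

/-- The edge-flipping group `W_E(X)`. -/
def edgeFlippingGroup (X : SimpleGraph V) :
    Subgroup ((X.edgeSet → ZMod 2) →ₗ[ZMod 2] (X.edgeSet → ZMod 2))ˣ :=
  Subgroup.closure (Set.range (edgeFlip X))

/-- Indicator of the neighborhood `N(v)`, in the vertex space `𝒱 = (V → ZMod 2)`. -/
def nbrFun (X : SimpleGraph V) (v : V) : V → ZMod 2 :=
  fun w => if X.Adj v w then 1 else 0

/-- The move `s_v` of the vertex-flipping puzzle, as an element of `GL(𝒱)`. -/
def vertexFlip (X : SimpleGraph V) (v : V) :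
    ((V → ZMod 2) →ₗ[ZMod 2] (V → ZMod 2))ˣ :=
  flipGL v (nbrFun X v) (by simp [nbrFun])

/-- The vertex-flipping group `W_V(X)`. -/
def vertexFlippingGroup (X : SimpleGraph V) :
    Subgroup ((V → ZMod 2) →ₗ[ZMod 2] (V → ZMod 2))ˣ :=
  Subgroup.closure (Set.range (vertexFlip X))

end

section TreeAux

open scoped Classical

noncomputable section

variable {V : Type*}

/-- The cut map `𝒱 → 𝓔`, `f ↦ (s(x,y) ↦ f x + f y)`. -/
def cutMap (X : SimpleGraph V) : (V → ZMod 2) →ₗ[ZMod 2] (X.edgeSet → ZMod 2) where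
  toFun f := fun e => Sym2.lift ⟨fun x y => f x + f y, fun _ _ => add_comm _ _⟩ e.1
  map_add' f g := by
    funext e
    obtain ⟨e, he⟩ := e
    induction e using Sym2.ind with
    | _ x y => simp [Sym2.lift_mk]; ring
  map_smul' c f := by
    funext e
    obtain ⟨e, he⟩ := e
    induction e using Sym2.ind with
    | _ x y => simp [Sym2.lift_mk]; ring

lemma cutMap_apply (X : SimpleGraph V) (f : V → ZMod 2) (x y : V) (h : s(x, y) ∈ X.edgeSet) :
    cutMap X f ⟨s(x, y), h⟩ = f x + f y := rfl

/-- Coordinate permutation as a linear map on the vertex space. -/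
def permL (σ : Equiv.Perm V) : (V → ZMod 2) →ₗ[ZMod 2] (V → ZMod 2) where
  toFun f := f ∘ σ.symm
  map_add' _ _ := rfl
  map_smul' _ _ := rfl

lemma permL_apply (σ : Equiv.Perm V) (f : V → ZMod 2) (w : V) :
    permL σ f w = f (σ.symm w) := rfl

lemma permL_mul (σ τ : Equiv.Perm V) : permL (σ * τ) = permL σ ∘ₗ permL τ := rfl

lemma permL_one : permL (1 : Equiv.Perm V) = LinearMap.id := rfl

lemma const_mem_ker (X : SimpleGraph V) (c : ZMod 2) :
    (fun _ => c : V → ZMod 2) ∈ LinearMap.ker (cutMap X) := by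
  rw [LinearMap.mem_ker]
  funext e
  obtain ⟨e, he⟩ := e
  induction e using Sym2.ind with
  | _ x y =>
    show c + c = 0
    exact CharTwo.add_self_eq_zero c

lemma ker_cutMap (X : SimpleGraph V) (hconn : X.Connected) :
    LinearMap.ker (cutMap X) = Submodule.span (ZMod 2) {(fun _ => 1 : V → ZMod 2)} := by
  apply le_antisymm
  · intro f hf
    have hadj : ∀ {x y : V}, X.Adj x y → f x = f y := by
      intro x y h
      have h0 : f x + f y = 0 := congrFun (LinearMap.mem_ker.mp hf) ⟨s(x, y), h⟩
      have := eq_neg_of_add_eq_zero_left h0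
      rwa [CharTwo.neg_eq] at this
    have hwalk : ∀ (x y : V) (_ : X.Walk x y), f x = f y := by
      intro x y p
      induction p with
      | nil => rfl
      | cons h _ ih => exact (hadj h).trans ih
    obtain ⟨v₀⟩ := hconn.nonempty
    rw [Submodule.mem_span_singleton]
    refine ⟨f v₀, funext fun w => ?_⟩
    have : f w = f v₀ := hwalk w v₀ (hconn.preconnected w v₀).some
    simp [this]
  · rw [Submodule.span_le, Set.singleton_subset_iff]
    exact const_mem_ker X 1

lemma permL_ker_le (X : SimpleGraph V) (hconn : X.Connected) (σ : Equiv.Perm V) :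
    LinearMap.ker (cutMap X) ≤ (LinearMap.ker (cutMap X)).comap (permL σ) := by
  intro f hf
  rw [ker_cutMap X hconn, Submodule.mem_span_singleton] at hf
  obtain ⟨c, rfl⟩ := hf
  simp only [Submodule.mem_comap]
  have : permL σ (c • fun _ => (1 : ZMod 2)) = fun _ => c := by
    funext w; simp [permL_apply]
  rw [this]
  exact const_mem_ker X c

section Rho

variable [Fintype V] (X : SimpleGraph V) (hconn : X.Connected)
  (hsurj : Function.Surjective (cutMap X))

/-- The ambient equivalence `𝒱 ⧸ ker ≃ 𝓔`. -/
def quotEquiv : ((V → ZMod 2) ⧸ LinearMap.ker (cutMap X)) ≃ₗ[ZMod 2] (X.edgeSet → ZMod 2) :=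
  LinearMap.quotKerEquivOfSurjective (cutMap X) hsurj

omit [Fintype V] in
lemma quotEquiv_mk (f : V → ZMod 2) :
    quotEquiv X hsurj (Submodule.Quotient.mk f) = cutMap X f := rfl

/-- The descended action of `σ` on the edge space. -/
def rhoVal (σ : Equiv.Perm V) : (X.edgeSet → ZMod 2) →ₗ[ZMod 2] (X.edgeSet → ZMod 2) :=
  (quotEquiv X hsurj).toLinearMap ∘ₗ
    Submodule.mapQ _ _ (permL σ) (permL_ker_le X hconn σ) ∘ₗ
      (quotEquiv X hsurj).symm.toLinearMap

lemma rhoVal_cutMap (σ : Equiv.Perm V) (f : V → ZMod 2) :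
    rhoVal X hconn hsurj σ (cutMap X f) = cutMap X (permL σ f) := by
  have h1 : (quotEquiv X hsurj).symm (cutMap X f) = Submodule.Quotient.mk f := by
    apply (quotEquiv X hsurj).injective
    rw [LinearEquiv.apply_symm_apply, quotEquiv_mk]
  simp only [rhoVal, LinearMap.coe_comp, Function.comp_apply, LinearEquiv.coe_coe, h1,
    Submodule.mapQ_apply]
  exact quotEquiv_mk X hsurj _

omit [Fintype V] in
include hsurj in
lemma linmap_ext {u v : (X.edgeSet → ZMod 2) →ₗ[ZMod 2] (X.edgeSet → ZMod 2)}
    (h : ∀ f, u (cutMap X f) = v (cutMap X f)) : u = v := by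
  apply LinearMap.ext
  intro G
  obtain ⟨f, rfl⟩ := hsurj G
  exact h f

/-- The homomorphism `Perm V →* GL(𝓔)`. -/
def rho : Equiv.Perm V →* ((X.edgeSet → ZMod 2) →ₗ[ZMod 2] (X.edgeSet → ZMod 2))ˣ where
  toFun σ :=
    { val := rhoVal X hconn hsurj σ
      inv := rhoVal X hconn hsurj σ⁻¹
      val_inv := linmap_ext X hsurj fun f => by
        rw [Module.End.mul_apply, rhoVal_cutMap, rhoVal_cutMap, Module.End.one_apply]
        have h : permL σ (permL σ⁻¹ f) = permL (σ * σ⁻¹) f := rfl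
        rw [h, mul_inv_cancel, permL_one, LinearMap.id_apply]
      inv_val := linmap_ext X hsurj fun f => by
        rw [Module.End.mul_apply, rhoVal_cutMap, rhoVal_cutMap, Module.End.one_apply]
        have h : permL σ⁻¹ (permL σ f) = permL (σ⁻¹ * σ) f := rfl
        rw [h, inv_mul_cancel, permL_one, LinearMap.id_apply] }
  map_one' := by
    apply Units.ext
    show rhoVal X hconn hsurj 1 = 1
    apply linmap_ext X hsurj
    intro f
    simp [rhoVal_cutMap, permL_one, Module.End.one_apply]
  map_mul' σ τ := by
    apply Units.ext
    show rhoVal X hconn hsurj (σ * τ) = rhoVal X hconn hsurj σ * rhoVal X hconn hsurj τ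
    apply linmap_ext X hsurj
    intro f
    simp only [Module.End.mul_apply, rhoVal_cutMap, permL_mul, LinearMap.comp_apply]

lemma rho_val (σ : Equiv.Perm V) : (rho X hconn hsurj σ).val = rhoVal X hconn hsurj σ := rfl

end Rho

end

end TreeAux

section TreeAux2

open scoped Classical

noncomputable section

variable {V : Type*}

lemma cutMap_surjective [Fintype V] (X : SimpleGraph V) (hconn : X.Connected)
    (hn : 3 ≤ Fintype.card V) (htree : X.edgeSet.ncard = Fintype.card V - 1) :
    Function.Surjective (cutMap X) := by
  haveI : Fintype ↥X.edgeSet := Set.Finite.fintype (Set.toFinite _)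
  rw [← LinearMap.range_eq_top]
  have hV : Nonempty V := Fintype.card_pos_iff.mp (by omega)
  have hker : Module.finrank (ZMod 2) (LinearMap.ker (cutMap X)) = 1 := by
    rw [ker_cutMap X hconn]
    refine finrank_span_singleton ?_
    obtain ⟨v⟩ := hV
    intro h
    exact one_ne_zero (congrFun h v)
  have h1 : Module.finrank (ZMod 2) (V → ZMod 2) = Fintype.card V := Module.finrank_pi _
  have h2 := LinearMap.finrank_range_add_finrank_ker (cutMap X)
  have hcard : Fintype.card ↥X.edgeSet = Fintype.card V - 1 := by
    rw [← Nat.card_eq_fintype_card, Nat.card_coe_set_eq, htree]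
  have h3 : Module.finrank (ZMod 2) (↥X.edgeSet → ZMod 2) = Fintype.card V - 1 := by
    rw [Module.finrank_pi, hcard]
  apply Submodule.eq_top_of_finrank_eq
  rw [h3, hker, h1] at *
  omega

lemma rho_swap [Fintype V] (X : SimpleGraph V) (hconn : X.Connected)
    (hsurj : Function.Surjective (cutMap X)) (x y : V) (he : s(x, y) ∈ X.edgeSet) :
    rho X hconn hsurj (Equiv.swap x y) = edgeFlip X ⟨s(x, y), he⟩ := by
  apply Units.ext
  show rhoVal X hconn hsurj (Equiv.swap x y) = _
  apply linmap_ext X hsurj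
  intro f
  rw [rhoVal_cutMap]
  have key : ∀ w, f (Equiv.swap x y w) =
      f w + (f x + f y) * (if w = x ∨ w = y then 1 else 0) := by
    intro w
    by_cases hwx : w = x
    · subst hwx
      rw [Equiv.swap_apply_left, if_pos (Or.inl rfl), mul_one, ← add_assoc,
        CharTwo.add_self_eq_zero, zero_add]
    · by_cases hwy : w = y
      · subst hwy
        rw [Equiv.swap_apply_right, if_pos (Or.inr rfl), mul_one]
        linear_combination (-1 : ZMod 2) * CharTwo.add_self_eq_zero (f w)
      · rw [Equiv.swap_apply_of_ne_of_ne hwx hwy, if_neg (by tauto), mul_zero, add_zero]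
  funext e
  obtain ⟨e, hee⟩ := e
  induction e using Sym2.ind with
  | _ a b =>
    show cutMap X (permL (Equiv.swap x y) f) ⟨s(a, b), hee⟩ =
      (cutMap X f + cutMap X f ⟨s(x, y), he⟩ •
        edgeCut X {v | v ∈ (s(x, y) : Sym2 V)}) ⟨s(a, b), hee⟩
    rw [Pi.add_apply, Pi.smul_apply, smul_eq_mul]
    have hcut : edgeCut X {v | v ∈ (s(x, y) : Sym2 V)} ⟨s(a, b), hee⟩ =
        (if a = x ∨ a = y then 1 else 0) + (if b = x ∨ b = y then 1 else 0) := by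
      show edgeCutFun _ s(a, b) = _
      simp [edgeCutFun, Sym2.mem_iff]
    have hxy' : cutMap X f ⟨s(x, y), he⟩ = f x + f y := rfl
    have hab' : cutMap X f ⟨s(a, b), hee⟩ = f a + f b := rfl
    have habp : cutMap X (permL (Equiv.swap x y) f) ⟨s(a, b), hee⟩ =
        f (Equiv.swap x y a) + f (Equiv.swap x y b) := by
      show permL (Equiv.swap x y) f a + permL (Equiv.swap x y) f b = _
      rw [permL_apply, permL_apply, Equiv.symm_swap]
    rw [hcut, hxy', hab', habp, key a, key b]
    ring

lemma swaps_gen [Fintype V] (X : SimpleGraph V) (hconn : X.Connected) :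
    Subgroup.closure {σ : Equiv.Perm V | ∃ x y, X.Adj x y ∧ σ = Equiv.swap x y} = ⊤ := by
  rw [eq_top_iff, ← Equiv.Perm.closure_isSwap, Subgroup.closure_le]
  set H := Subgroup.closure {σ : Equiv.Perm V | ∃ x y, X.Adj x y ∧ σ = Equiv.swap x y} with hH
  have key : ∀ (w u : V) (_ : X.Walk u w), u ≠ w → Equiv.swap u w ∈ H := by
    intro w u p
    induction p with
    | nil => intro h; exact absurd rfl h
    | @cons u v w huv p ih =>
      intro huw
      rcases eq_or_ne v w with rfl | hvw
      · exact Subgroup.subset_closure ⟨u, v, huv, rfl⟩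
      · have h1 : Equiv.swap v u ∈ H := by
          rw [Equiv.swap_comm]
          exact Subgroup.subset_closure ⟨u, v, huv, rfl⟩
        have h2 : Equiv.swap w v ∈ H := by
          rw [Equiv.swap_comm]
          exact ih hvw
        have h3 := Equiv.swap_mul_swap_mul_swap hvw.symm huw.symm
        rw [← h3]
        exact H.mul_mem (H.mul_mem h1 h2) h1
  intro σ hσ
  obtain ⟨x, y, hxy, rfl⟩ := hσ
  exact key y x (hconn.preconnected x y).some hxy

lemma rho_injective [Fintype V] (X : SimpleGraph V) (hconn : X.Connected)
    (hsurj : Function.Surjective (cutMap X)) (hn : 3 ≤ Fintype.card V) :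
    Function.Injective (rho X hconn hsurj) := by
  rw [injective_iff_map_eq_one]
  intro σ hσ
  have hval : rhoVal X hconn hsurj σ = 1 := by
    have := congrArg Units.val hσ
    exact this
  have hfix : ∀ f, cutMap X (permL σ f) = cutMap X f := by
    intro f
    rw [← rhoVal_cutMap X hconn hsurj, hval, Module.End.one_apply]
  ext v
  show σ v = v
  set δ : V → ZMod 2 := fun w => if w = v then 1 else 0 with hδ
  have h1 : permL σ δ = fun w => if w = σ v then 1 else 0 := by
    funext w
    rw [permL_apply, hδ]
    exact if_congr (Equiv.symm_apply_eq σ) rfl rfl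
  have h2 : permL σ δ + δ ∈ LinearMap.ker (cutMap X) := by
    rw [LinearMap.mem_ker, map_add, hfix]
    funext e
    exact CharTwo.add_self_eq_zero _
  rw [ker_cutMap X hconn, Submodule.mem_span_singleton] at h2
  obtain ⟨c, hc⟩ := h2
  have hcc : ∀ c : ZMod 2, c = 0 ∨ c = 1 := by decide
  rcases hcc c with rfl | rfl
  · by_contra hne
    rw [zero_smul] at hc
    have hr : ((permL σ) δ + δ) v =
        (if v = σ v then (1 : ZMod 2) else 0) + (if v = v then 1 else 0) := by
      rw [Pi.add_apply, h1]
    have hcv := (congrFun hc v).trans hr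
    rw [if_neg (fun h : v = σ v => hne h.symm), if_pos rfl, zero_add] at hcv
    exact one_ne_zero hcv.symm
  · obtain ⟨w, hw⟩ : ∃ w, w ∉ ({v, σ v} : Finset V) := by
      by_contra hcon
      push_neg at hcon
      have hsub : (Finset.univ : Finset V) ⊆ {v, σ v} := fun w _ => hcon w
      have hle := Finset.card_le_card hsub
      have hle2 := Finset.card_insert_le v ({σ v} : Finset V)
      rw [Finset.card_univ] at hle
      rw [Finset.card_singleton] at hle2
      omega
    simp only [Finset.mem_insert, Finset.mem_singleton, not_or] at hw
    rw [one_smul] at hc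
    have hr : ((permL σ) δ + δ) w =
        (if w = σ v then (1 : ZMod 2) else 0) + (if w = v then 1 else 0) := by
      rw [Pi.add_apply, h1]
    have hcv := (congrFun hc w).trans hr
    rw [if_neg hw.2, if_neg hw.1, add_zero] at hcv
    exact absurd hcv one_ne_zero

end

end TreeAux2

/-- If `X` is a finite simple connected graph with `n ≥ 3` vertices which
is a tree (i.e. it has exactly `n - 1` edges), then the edge-flipping group `W_E(X)` is
isomorphic to the symmetric group of degree `n`. -/
theorem edgeFlippingGroup_of_tree {V : Type*} [Fintype V] (X : SimpleGraph V)
    (hconn : X.Connected) (hn : 3 ≤ Fintype.card V)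
    (htree : X.edgeSet.ncard = Fintype.card V - 1) :
    Nonempty (↥(edgeFlippingGroup X) ≃* Equiv.Perm V) := by
  have hsurj := cutMap_surjective X hconn hn htree
  have hinj : Function.Injective (rho X hconn hsurj) := rho_injective X hconn hsurj hn
  have hrange : (rho X hconn hsurj).range = edgeFlippingGroup X := by
    apply le_antisymm
    · rw [MonoidHom.range_eq_map, ← swaps_gen X hconn, MonoidHom.map_closure]
      rw [Subgroup.closure_le]
      rintro _ ⟨σ, ⟨x, y, hadj, rfl⟩, rfl⟩
      rw [rho_swap X hconn hsurj x y (X.mem_edgeSet.mpr hadj)]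
      exact Subgroup.subset_closure ⟨⟨s(x, y), X.mem_edgeSet.mpr hadj⟩, rfl⟩
    · show edgeFlippingGroup X ≤ _
      rw [edgeFlippingGroup, Subgroup.closure_le]
      rintro _ ⟨ε, rfl⟩
      obtain ⟨e, he⟩ := ε
      induction e using Sym2.ind with
      | _ x y => exact ⟨Equiv.swap x y, rho_swap X hconn hsurj x y he⟩
  exact ⟨(MulEquiv.subgroupCongr hrange.symm).trans (MonoidHom.ofInjective hinj).symm⟩
end

section
/- Let X=(V,E) be a finite simple connected graph with n ≥ 3 vertices and let T be a spanning tree of E. Then the orbits of the bond space 𝓑 under the edge-flipping group W_E(X) coincide with the orbits of 𝓑 under the subgroup W_E(X)_T, and these orbits are exactly the sets Ω_i := {G ∈ 𝓑 : sw(G) = i or sw(G) = n − i} for i = 0, 1, …, ⌈(n−1)/2⌉. -/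
open scoped Classical

/-- The orbit of a configuration `G` under a subgroup `H` of `GL(𝓔)`. -/
def orbitOf {V : Type*} (X : SimpleGraph V)
    (H : Subgroup ((X.edgeSet → ZMod 2) →ₗ[ZMod 2] (X.edgeSet → ZMod 2))ˣ)
    (G : X.edgeSet → ZMod 2) : Set (X.edgeSet → ZMod 2) :=
  {G' | ∃ g ∈ H, g.val G = G'}

/-- `Ω_i`: the set of elements of the bond space of simple weight `i` or `n - i`
(with respect to the simple basis `{E(v) : v ≠ u}`). -/
def simpleOmega {V : Type*} [Fintype V] (X : SimpleGraph V) (u : V) (i : ℕ) :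
    Set (X.edgeSet → ZMod 2) :=
  {G | ∃ S : Finset V, u ∉ S ∧ (∑ v ∈ S, edgeCut X {v}) = G ∧
        (S.card = i ∨ S.card = Fintype.card V - i)}

open scoped symmDiff

section MyAux

variable {V : Type*}

lemma edgeCutFun_mk' (U : Set V) (a b : V) :
    edgeCutFun U s(a, b) = (if a ∈ U then 1 else 0) + (if b ∈ U then 1 else 0) := rfl

lemma edgeCut_symmDiff' (X : SimpleGraph V) (A B : Set V) :
    edgeCut X (A ∆ B) = edgeCut X A + edgeCut X B := by
  funext ⟨e, he⟩
  induction e using Sym2.ind with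
  | _ a b =>
    show edgeCutFun (A ∆ B) s(a, b) = edgeCutFun A s(a, b) + edgeCutFun B s(a, b)
    rw [edgeCutFun_mk', edgeCutFun_mk', edgeCutFun_mk']
    by_cases h1 : a ∈ A <;> by_cases h2 : a ∈ B <;> by_cases h3 : b ∈ A <;>
      by_cases h4 : b ∈ B <;>
      simp [Set.mem_symmDiff, h1, h2, h3, h4] <;> decide

lemma edgeCut_compl' (X : SimpleGraph V) (U : Set V) :
    edgeCut X Uᶜ = edgeCut X U := by
  funext ⟨e, he⟩
  induction e using Sym2.ind with
  | _ a b =>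
    show edgeCutFun Uᶜ s(a, b) = edgeCutFun U s(a, b)
    rw [edgeCutFun_mk', edgeCutFun_mk']
    by_cases h1 : a ∈ U <;> by_cases h2 : b ∈ U <;> simp [h1, h2] <;> decide

lemma sum_edgeCut' (X : SimpleGraph V) (S : Finset V) :
    (∑ v ∈ S, edgeCut X {v}) = edgeCut X ↑S := by
  funext ⟨e, he⟩
  induction e using Sym2.ind with
  | _ a b =>
    have : (∑ v ∈ S, edgeCut X {v}) ⟨s(a,b), he⟩ = ∑ v ∈ S, edgeCutFun {v} s(a,b) := by
      simp [edgeCut]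
    rw [this]
    show _ = edgeCutFun (↑S) s(a, b)
    rw [edgeCutFun_mk']
    have h1 : ∀ v : V, edgeCutFun {v} s(a,b) =
        (if v = a then (1:ZMod 2) else 0) + (if v = b then 1 else 0) := by
      intro v
      rw [edgeCutFun_mk']
      simp [eq_comm]
    simp only [h1]
    rw [Finset.sum_add_distrib, Finset.sum_ite_eq' S a (fun _ => (1:ZMod 2)),
      Finset.sum_ite_eq' S b (fun _ => (1:ZMod 2))]
    simp

lemma sym2_cases (e : Sym2 V) : ∃ x y, e = s(x, y) := by
  induction e using Sym2.ind with
  | _ x y => exact ⟨x, y, rfl⟩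

lemma edgeFlip_apply (X : SimpleGraph V) (ε : X.edgeSet) (G : X.edgeSet → ZMod 2) :
    (edgeFlip X ε).val G = G + G ε • edgeCut X {v | v ∈ (ε : Sym2 V)} := rfl

lemma edgeFlip_involutive (X : SimpleGraph V) (ε : X.edgeSet) (G : X.edgeSet → ZMod 2) :
    (edgeFlip X ε).val ((edgeFlip X ε).val G) = G :=
  flipLin_flipLin ε _ (edgeCutFun_self ε.1) G

lemma cutset_pair (X : SimpleGraph V) (ε : X.edgeSet) (x y : V)
    (h : (ε : Sym2 V) = s(x, y)) : {v | v ∈ (ε : Sym2 V)} = ({x, y} : Set V) := by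
  ext v
  simp [h, Sym2.mem_iff]

lemma edgeFlip_edgeCut_same (X : SimpleGraph V) (ε : X.edgeSet) (x y : V)
    (h : (ε : Sym2 V) = s(x, y)) (S : Set V) (hxy : x ∈ S ↔ y ∈ S) :
    (edgeFlip X ε).val (edgeCut X S) = edgeCut X S := by
  rw [edgeFlip_apply]
  have h0 : edgeCut X S ε = 0 := by
    show edgeCutFun S ε.1 = 0
    rw [h, edgeCutFun_mk']
    by_cases hx : x ∈ S
    · rw [if_pos hx, if_pos (hxy.mp hx)]; decide
    · rw [if_neg hx, if_neg (fun hy => hx (hxy.mpr hy))]; decide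
  rw [h0, zero_smul, add_zero]

lemma edgeFlip_edgeCut_diff (X : SimpleGraph V) (ε : X.edgeSet) (x y : V)
    (h : (ε : Sym2 V) = s(x, y)) (S : Set V) (hxy : ¬ (x ∈ S ↔ y ∈ S)) :
    (edgeFlip X ε).val (edgeCut X S) = edgeCut X (S ∆ {x, y}) := by
  rw [edgeFlip_apply]
  have h0 : edgeCut X S ε = 1 := by
    show edgeCutFun S ε.1 = 1
    rw [h, edgeCutFun_mk']
    by_cases hx : x ∈ S <;> by_cases hy : y ∈ S <;> simp [hx, hy] at hxy ⊢
  rw [h0, one_smul, cutset_pair X ε x y h, edgeCut_symmDiff']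

lemma pair_symmDiff {a b c : V} (hab : a ≠ b) (hac : a ≠ c) (hbc : b ≠ c) :
    (({a, c} : Set V) ∆ {c, b} : Set V) = {a, b} := by
  ext v
  by_cases h1 : v = a <;> by_cases h2 : v = b <;> by_cases h3 : v = c <;>
    simp_all [Set.mem_symmDiff]

section Orbits

variable {V : Type*}

abbrev EGL (X : SimpleGraph V) := ((X.edgeSet → ZMod 2) →ₗ[ZMod 2] (X.edgeSet → ZMod 2))ˣ

lemma rel_symm {X : SimpleGraph V} {H : Subgroup (EGL X)} {G G' : X.edgeSet → ZMod 2}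
    (h : ∃ g ∈ H, g.val G = G') : ∃ g ∈ H, g.val G' = G := by
  obtain ⟨g, hg, hgG⟩ := h
  refine ⟨g⁻¹, inv_mem hg, ?_⟩
  rw [← hgG]
  have : (g⁻¹ * g).val = 1 := by rw [inv_mul_cancel]; rfl
  calc g⁻¹.val (g.val G) = (g⁻¹ * g).val G := by rw [Units.val_mul]; rfl
    _ = G := by rw [this]; rfl

lemma rel_trans {X : SimpleGraph V} {H : Subgroup (EGL X)} {G G' G'' : X.edgeSet → ZMod 2}
    (h : ∃ g ∈ H, g.val G = G') (h' : ∃ g ∈ H, g.val G' = G'') :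
    ∃ g ∈ H, g.val G = G'' := by
  obtain ⟨g, hg, hgG⟩ := h
  obtain ⟨g', hg', hgG'⟩ := h'
  refine ⟨g' * g, mul_mem hg' hg, ?_⟩
  rw [Units.val_mul]
  show g'.val (g.val G) = G''
  rw [hgG, hgG']

lemma orbit_eq_of_rel {X : SimpleGraph V} {H : Subgroup (EGL X)} {G G' : X.edgeSet → ZMod 2}
    (h : ∃ g ∈ H, g.val G = G') : orbitOf X H G = orbitOf X H G' := by
  ext G''
  exact ⟨fun h' => rel_trans (rel_symm h) h', fun h' => rel_trans h h'⟩

variable [Fintype V]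

/-- Sliding a token along a walk in the spanning subgraph. -/
lemma slide (X : SimpleGraph V) (T : Set (Sym2 V)) (hTsub : T ⊆ X.edgeSet)
    {a b : V} (w : (SimpleGraph.fromEdgeSet T).Walk a b) (S : Set V)
    (ha : a ∈ S) (hb : b ∉ S) :
    ∃ g ∈ Subgroup.closure {g | ∃ ε : X.edgeSet, (ε : Sym2 V) ∈ T ∧ g = edgeFlip X ε},
      g.val (edgeCut X S) = edgeCut X (S ∆ {a, b}) := by
  induction w generalizing S with
  | nil => exact absurd ha hb
  | @cons a c b h p ih =>
    rw [SimpleGraph.fromEdgeSet_adj] at h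
    obtain ⟨hT, hac⟩ := h
    set ε : X.edgeSet := ⟨s(a, c), hTsub hT⟩ with hε
    have hεmem : edgeFlip X ε ∈
        Subgroup.closure {g | ∃ ε : X.edgeSet, (ε : Sym2 V) ∈ T ∧ g = edgeFlip X ε} :=
      Subgroup.subset_closure ⟨ε, hT, rfl⟩
    have hab : a ≠ b := fun h => hb (h ▸ ha)
    by_cases hc : c ∈ S
    · -- move c to b first, then a to c
      have hcb : c ≠ b := fun h => hb (h ▸ hc)
      obtain ⟨g1, hg1, e1⟩ := ih S hc hb
      have haS2 : a ∈ S ∆ ({c, b} : Set V) := by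
        simp [Set.mem_symmDiff, ha, hac, hab]
      have hcS2 : c ∉ S ∆ ({c, b} : Set V) := by
        simp [Set.mem_symmDiff, hc]
      have e2 : (edgeFlip X ε).val (edgeCut X (S ∆ {c, b}))
          = edgeCut X (S ∆ {a, b}) := by
        rw [edgeFlip_edgeCut_diff X ε a c rfl _ (by tauto), symmDiff_assoc,
          symmDiff_comm ({c, b} : Set V), pair_symmDiff hab hac hcb.symm]
      refine ⟨edgeFlip X ε * g1, mul_mem hεmem hg1, ?_⟩
      rw [Units.val_mul]
      show (edgeFlip X ε).val (g1.val (edgeCut X S)) = _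
      rw [e1, e2]
    · by_cases hcb : c = b
      · subst hcb
        exact ⟨edgeFlip X ε, hεmem, edgeFlip_edgeCut_diff X ε a c rfl _ (by tauto)⟩
      · -- move a to c first, then c to b
        have e1 : (edgeFlip X ε).val (edgeCut X S) = edgeCut X (S ∆ {a, c}) :=
          edgeFlip_edgeCut_diff X ε a c rfl _ (by tauto)
        have hcS1 : c ∈ S ∆ ({a, c} : Set V) := by
          simp [Set.mem_symmDiff, hc]
        have hbS1 : b ∉ S ∆ ({a, c} : Set V) := by
          simp [Set.mem_symmDiff, hb, hab.symm, Ne.symm hcb]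
        obtain ⟨g1, hg1, e2⟩ := ih (S ∆ {a, c}) hcS1 hbS1
        rw [symmDiff_assoc, pair_symmDiff hab hac (Ne.symm hcb)] at e2
        refine ⟨g1 * edgeFlip X ε, mul_mem hg1 hεmem, ?_⟩
        rw [Units.val_mul]
        show g1.val ((edgeFlip X ε).val (edgeCut X S)) = _
        rw [e1, e2]

lemma coe_move {S : Finset V} {a b : V} (ha : a ∈ S) (hb : b ∉ S) :
    (↑(insert b (S.erase a)) : Set V) = ↑S ∆ ({a, b} : Set V) := by
  have hab : a ≠ b := fun h => hb (h ▸ ha)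
  ext v
  by_cases h1 : v = a <;> by_cases h2 : v = b <;>
    simp_all [Set.mem_symmDiff]

lemma move_card {S : Finset V} {a b : V} (ha : a ∈ S) (hb : b ∉ S) :
    (insert b (S.erase a)).card = S.card := by
  rw [Finset.card_insert_of_notMem (fun h => hb (Finset.mem_of_mem_erase h)),
    Finset.card_erase_of_mem ha]
  have : 0 < S.card := Finset.card_pos.mpr ⟨a, ha⟩
  omega

/-- Transitivity on equal-cardinality token sets, via the spanning tree. -/
lemma trans_card (X : SimpleGraph V) (T : Set (Sym2 V)) (hTsub : T ⊆ X.edgeSet)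
    (hTconn : (SimpleGraph.fromEdgeSet T).Connected) :
    ∀ (k : ℕ) (S S' : Finset V), (S' \ S).card = k → S.card = S'.card →
    ∃ g ∈ Subgroup.closure {g | ∃ ε : X.edgeSet, (ε : Sym2 V) ∈ T ∧ g = edgeFlip X ε},
      g.val (edgeCut X ↑S) = edgeCut X ↑S' := by
  intro k
  induction k using Nat.strong_induction_on with
  | _ k ih =>
    intro S S' hk hcard
    rcases Nat.eq_zero_or_pos k with hk0 | hkpos
    · subst hk0
      have hsub : S' ⊆ S := by
        intro v hv
        by_contra hvS
        have : v ∈ S' \ S := Finset.mem_sdiff.mpr ⟨hv, hvS⟩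
        rw [Finset.card_eq_zero.mp hk] at this
        exact absurd this (Finset.notMem_empty v)
      have : S = S' := (Finset.eq_of_subset_of_card_le hsub (le_of_eq hcard)).symm
      subst this
      exact ⟨1, one_mem _, rfl⟩
    · have hne : (S' \ S).Nonempty := Finset.card_pos.mp (hk ▸ hkpos)
      obtain ⟨b, hbmem⟩ := hne
      have hb' : b ∈ S' := (Finset.mem_sdiff.mp hbmem).1
      have hb : b ∉ S := (Finset.mem_sdiff.mp hbmem).2
      have hne2 : (S \ S').Nonempty := by
        by_contra h
        rw [Finset.not_nonempty_iff_eq_empty, Finset.sdiff_eq_empty_iff_subset] at h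
        have : S = S' := Finset.eq_of_subset_of_card_le h (le_of_eq hcard.symm)
        subst this
        exact hb hb'
      obtain ⟨a, hamem⟩ := hne2
      have ha : a ∈ S := (Finset.mem_sdiff.mp hamem).1
      have ha' : a ∉ S' := (Finset.mem_sdiff.mp hamem).2
      obtain ⟨w⟩ := hTconn.preconnected a b
      obtain ⟨g1, hg1, e1⟩ := slide X T hTsub w ↑S ha hb
      rw [← coe_move ha hb] at e1
      set S2 : Finset V := insert b (S.erase a) with hS2
      have hcard2 : S2.card = S'.card := by rw [move_card ha hb]; exact hcard
      have hsub2 : S' \ S2 ⊆ (S' \ S).erase b := by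
        intro v hv
        rw [Finset.mem_sdiff] at hv
        obtain ⟨hv1, hv2⟩ := hv
        rw [Finset.mem_erase, Finset.mem_sdiff]
        have hvb : v ≠ b := fun h => hv2 (h ▸ Finset.mem_insert_self b _)
        refine ⟨hvb, hv1, fun hvS => ?_⟩
        rcases eq_or_ne v a with rfl | hva
        · exact ha' hv1
        · exact hv2 (Finset.mem_insert_of_mem (Finset.mem_erase.mpr ⟨hva, hvS⟩))
      have hlt : (S' \ S2).card < k := by
        calc (S' \ S2).card ≤ ((S' \ S).erase b).card := Finset.card_le_card hsub2
          _ < (S' \ S).card := Finset.card_erase_lt_of_mem hbmem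
          _ = k := hk
      obtain ⟨g2, hg2, e2⟩ := ih _ hlt S2 S' rfl hcard2
      refine ⟨g2 * g1, mul_mem hg2 hg1, ?_⟩
      rw [Units.val_mul]
      show g2.val (g1.val (edgeCut X ↑S)) = _
      rw [e1, e2]

/-- invariance of `simpleOmega` under a single edge flip. -/
lemma omega_flip (X : SimpleGraph V) (u : V) (i : ℕ) (hi : i ≤ Fintype.card V)
    (ε : X.edgeSet) (G : X.edgeSet → ZMod 2) (hG : G ∈ simpleOmega X u i) :
    (edgeFlip X ε).val G ∈ simpleOmega X u i := by
  obtain ⟨S, hu, hsum, hcard⟩ := hG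
  rw [sum_edgeCut'] at hsum
  subst hsum
  obtain ⟨x, y, hxy⟩ := sym2_cases (ε : Sym2 V)
  by_cases hsame : (x ∈ S ↔ y ∈ S)
  · rw [edgeFlip_edgeCut_same X ε x y hxy ↑S (by simpa using hsame)]
    exact ⟨S, hu, sum_edgeCut' X S, hcard⟩
  · rw [edgeFlip_edgeCut_diff X ε x y hxy ↑S (by simpa using hsame)]
    -- the token moves along ε
    have key : ∃ S2 : Finset V, (↑S2 : Set V) = ↑S ∆ ({x, y} : Set V) ∧
        S2.card = S.card := by
      by_cases hx : x ∈ S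
      · have hy : y ∉ S := by tauto
        exact ⟨insert y (S.erase x), coe_move hx hy, move_card hx hy⟩
      · have hy : y ∈ S := by tauto
        refine ⟨insert x (S.erase y), ?_, move_card hy hx⟩
        rw [coe_move hy hx, Set.pair_comm]
    obtain ⟨S2, hS2coe, hS2card⟩ := key
    rw [← hS2coe]
    by_cases hu2 : u ∈ S2
    · refine ⟨S2ᶜ, by simp [hu2], ?_, ?_⟩
      · rw [sum_edgeCut', Finset.coe_compl, edgeCut_compl']
      · rw [Finset.card_compl, hS2card]
        have hSle : S.card ≤ Fintype.card V := S.card_le_univ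
        omega
    · exact ⟨S2, hu2, by rw [sum_edgeCut', hS2coe], hS2card ▸ hcard⟩

/-- invariance of `simpleOmega` under the whole edge-flipping group. -/
lemma omega_invariant (X : SimpleGraph V) (u : V) (i : ℕ) (hi : i ≤ Fintype.card V)
    {g : EGL X} (hg : g ∈ edgeFlippingGroup X) :
    ∀ G, G ∈ simpleOmega X u i ↔ g.val G ∈ simpleOmega X u i := by
  induction hg using Subgroup.closure_induction with
  | mem g' hg' =>
    obtain ⟨ε, rfl⟩ := hg'
    intro G
    constructor
    · exact omega_flip X u i hi ε G
    · intro h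
      have := omega_flip X u i hi ε _ h
      rwa [edgeFlip_involutive] at this
  | one => intro G; simp only [Units.val_one, Module.End.one_apply]
  | mul g' h' _ _ ih1 ih2 =>
    intro G
    rw [Units.val_mul]
    show _ ↔ g'.val (h'.val G) ∈ _
    exact (ih2 G).trans (ih1 (h'.val G))
  | inv g' _ ih =>
    intro G
    have hcancel : g'.val (g'⁻¹.val G) = G := by
      have h1 : (g' * g'⁻¹).val = 1 := by rw [mul_inv_cancel]; rfl
      calc g'.val (g'⁻¹.val G) = (g' * g'⁻¹).val G := by rw [Units.val_mul]; rfl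
        _ = G := by rw [h1]; rfl
    conv_lhs => rw [← hcancel]
    exact (ih (g'⁻¹.val G)).symm

/-- The main orbit computation. -/
lemma orbit_main (X : SimpleGraph V) (T : Set (Sym2 V)) (hTsub : T ⊆ X.edgeSet)
    (hTconn : (SimpleGraph.fromEdgeSet T).Connected) (u : V)
    (i : ℕ) (hi : i ≤ Fintype.card V / 2) (S : Finset V) (hu : u ∉ S)
    (hcard : S.card = i ∨ S.card = Fintype.card V - i) :
    orbitOf X (Subgroup.closure {g | ∃ ε : X.edgeSet, (ε : Sym2 V) ∈ T ∧ g = edgeFlip X ε})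
        (edgeCut X ↑S) = simpleOmega X u i ∧
    orbitOf X (edgeFlippingGroup X) (edgeCut X ↑S) = simpleOmega X u i := by
  have hin : i ≤ Fintype.card V := le_trans hi (Nat.div_le_self _ _)
  have htree_le : Subgroup.closure {g | ∃ ε : X.edgeSet, (ε : Sym2 V) ∈ T ∧ g = edgeFlip X ε}
      ≤ edgeFlippingGroup X := by
    rw [Subgroup.closure_le]
    rintro g ⟨ε, hε, rfl⟩
    exact Subgroup.subset_closure ⟨ε, rfl⟩
  have hmem : edgeCut X ↑S ∈ simpleOmega X u i := ⟨S, hu, sum_edgeCut' X S, hcard⟩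
  have h1 : simpleOmega X u i ⊆
      orbitOf X (Subgroup.closure {g | ∃ ε : X.edgeSet, (ε : Sym2 V) ∈ T ∧ g = edgeFlip X ε})
        (edgeCut X ↑S) := by
    rintro G ⟨S', hu', hsum', hcard'⟩
    rw [sum_edgeCut'] at hsum'
    subst hsum'
    by_cases hc : S.card = S'.card
    · exact trans_card X T hTsub hTconn _ S S' rfl hc
    · have hub : S'.card ≤ Fintype.card V := by
        simpa using S'.card_le_univ
      have hcc : S.card = S'ᶜ.card := by
        rw [Finset.card_compl]
        omega
      have := trans_card X T hTsub hTconn _ S S'ᶜ rfl hcc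
      rwa [Finset.coe_compl, edgeCut_compl'] at this
  have h2 : orbitOf X (edgeFlippingGroup X) (edgeCut X ↑S) ⊆ simpleOmega X u i := by
    rintro G ⟨g, hg, rfl⟩
    exact (omega_invariant X u i hin hg _).mp hmem
  have h3 : orbitOf X (Subgroup.closure
        {g | ∃ ε : X.edgeSet, (ε : Sym2 V) ∈ T ∧ g = edgeFlip X ε}) (edgeCut X ↑S) ⊆
      orbitOf X (edgeFlippingGroup X) (edgeCut X ↑S) := by
    rintro G ⟨g, hg, e⟩
    exact ⟨g, htree_le hg, e⟩
  exact ⟨subset_antisymm (h3.trans h2) h1, subset_antisymm h2 (h1.trans h3)⟩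

/-- Every element of the bond space is an edge cut `E(S)` with `u ∉ S`. -/
lemma bond_repr (X : SimpleGraph V) (u : V) {G : X.edgeSet → ZMod 2}
    (hG : G ∈ bondSpace X) : ∃ S : Finset V, u ∉ S ∧ edgeCut X ↑S = G := by
  rw [bondSpace, Submodule.mem_span_range_iff_exists_fun] at hG
  obtain ⟨c, hc⟩ := hG
  have hzo : ∀ x : ZMod 2, x = 0 ∨ x = 1 := by decide
  set S0 : Finset V := Finset.univ.filter (fun v => c v = 1) with hS0
  have hG0 : edgeCut X ↑S0 = G := by
    rw [← sum_edgeCut', ← hc, hS0, Finset.sum_filter]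
    apply Finset.sum_congr rfl
    intro v _
    rcases hzo (c v) with h | h <;> simp [h]
  by_cases hu : u ∈ S0
  · exact ⟨S0ᶜ, by simp [hu], by rw [Finset.coe_compl, edgeCut_compl', hG0]⟩
  · exact ⟨S0, hu, hG0⟩

end Orbits

end MyAux


/-- For a finite simple connected graph `X` with `n ≥ 3` vertices, a
spanning tree `T` and a fixed vertex `u`: the orbits of the bond space `𝓑` under `W_E(X)`
coincide with the orbits under `W_E(X)_T`, and these orbits are exactly the sets
`Ω_i = {G ∈ 𝓑 : sw(G) = i or n - i}` for `i = 0, 1, …, ⌈(n-1)/2⌉` (note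
`⌈(n-1)/2⌉ = n / 2` in natural division). -/
theorem orbits_of_bondSpace {V : Type*} [Fintype V] (X : SimpleGraph V)
    (hconn : X.Connected) (hn : 3 ≤ Fintype.card V)
    (T : Set (Sym2 V)) (hTsub : T ⊆ X.edgeSet)
    (hTcard : T.ncard = Fintype.card V - 1)
    (hTconn : (SimpleGraph.fromEdgeSet T).Connected) (u : V) :
    (∀ G ∈ bondSpace X,
      orbitOf X (edgeFlippingGroup X) G
        = orbitOf X (Subgroup.closure
            {g | ∃ ε : X.edgeSet, (ε : Sym2 V) ∈ T ∧ g = edgeFlip X ε}) G) ∧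
    (∀ G ∈ bondSpace X, ∃ i ≤ Fintype.card V / 2,
      orbitOf X (edgeFlippingGroup X) G = simpleOmega X u i) ∧
    (∀ i ≤ Fintype.card V / 2, ∃ G ∈ bondSpace X,
      orbitOf X (edgeFlippingGroup X) G = simpleOmega X u i) := by
  have key : ∀ G ∈ bondSpace X, ∃ i ≤ Fintype.card V / 2,
      orbitOf X (Subgroup.closure
          {g | ∃ ε : X.edgeSet, (ε : Sym2 V) ∈ T ∧ g = edgeFlip X ε}) G = simpleOmega X u i ∧
      orbitOf X (edgeFlippingGroup X) G = simpleOmega X u i := by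
    intro G hG
    obtain ⟨S, hu, rfl⟩ := bond_repr X u hG
    have hub : S.card ≤ Fintype.card V := by simpa using S.card_le_univ
    refine ⟨min S.card (Fintype.card V - S.card), by omega, ?_⟩
    exact orbit_main X T hTsub hTconn u _ (by omega) S hu (by omega)
  refine ⟨?_, ?_, ?_⟩
  · intro G hG
    obtain ⟨i, hi, h1, h2⟩ := key G hG
    rw [h1, h2]
  · intro G hG
    obtain ⟨i, hi, _, h2⟩ := key G hG
    exact ⟨i, hi, h2⟩
  · intro i hi
    have hcard : i ≤ (Finset.univ.erase u).card := by
      rw [Finset.card_erase_of_mem (Finset.mem_univ u), Finset.card_univ]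
      omega
    obtain ⟨S, hS, hScard⟩ := Finset.exists_subset_card_eq hcard
    have hu : u ∉ S := fun h => (Finset.mem_erase.mp (hS h)).1 rfl
    have hbond : edgeCut X ↑S ∈ bondSpace X := by
      rw [← sum_edgeCut']
      exact Submodule.sum_mem _ fun v _ => edgeCut_single_mem_bondSpace X v
    refine ⟨edgeCut X ↑S, hbond, ?_⟩
    exact (orbit_main X T hTsub hTconn u i hi S hu (Or.inl hScard)).2
end

section
/- Let Y=(Z,H) be the finite simple connected graph with vertex set Z = {0,1,…,m−1} (m ≥ 2) and edge set H = {{1,2},{2,3},…,{m−2,m−1}} ∪ {{0,i_1},…,{0,i_ℓ}} where 1 ≤ i_1 < i_2 < ⋯ < i_ℓ ≤ m−1, and let π_1 be its value, defined as π_1 = Σ_{t=1}^{ℓ} (−1)^t i_t if ℓ is even, and π_1 = Σ_{t=1}^{ℓ} (−1)^t i_t + m if ℓ is odd. If Y is isomorphic to the line graph L(X) of some finite simple connected graph X, then π_1 ∈ {1, 2, m−2, m−1}. -/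
open scoped Classical

/-- The graph `Y` on `Z = {0, 1, …, m-1}`: the path `1 - 2 - ⋯ - (m-1)` together with the
edges `{0, i}` for `i` in the set `I = {i_1 < i_2 < ⋯ < i_ℓ} ⊆ {1, …, m-1}`. -/
def Ygraph (m : ℕ) (I : Finset ℕ) : SimpleGraph (Fin m) where
  Adj a b := (a.val + 1 = b.val ∧ 1 ≤ a.val) ∨ (b.val + 1 = a.val ∧ 1 ≤ b.val)
    ∨ (a.val = 0 ∧ b.val ∈ I ∧ 1 ≤ b.val) ∨ (b.val = 0 ∧ a.val ∈ I ∧ 1 ≤ a.val)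
  symm := ⟨fun a b h => by tauto⟩
  loopless := ⟨fun a h => by
    rcases h with ⟨h1, h2⟩ | ⟨h1, h2⟩ | ⟨h1, h2, h3⟩ | ⟨h1, h2, h3⟩ <;> omega⟩

/-- The value `π₁` of the graph `Y`: with `I = {i_1 < ⋯ < i_ℓ}`, it is
`∑_{t=1}^{ℓ} (-1)^t i_t`, plus `m` if `ℓ` is odd. -/
def piOne (m : ℕ) (I : Finset ℕ) : ℤ :=
  (∑ t ∈ Finset.range I.card, (-1 : ℤ) ^ (t + 1) * ((I.sort (· ≤ ·)).getD t 0)) +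
    if Even I.card then 0 else (m : ℤ)

section Aux

lemma sort_eq_of_sorted {I : Finset ℕ} {l : List ℕ} (h1 : l.Pairwise (· < ·))
    (h2 : l.toFinset = I) : I.sort (· ≤ ·) = l := by
  subst h2
  exact (List.toFinset_sort _ h1.nodup).2 (h1.imp le_of_lt)

lemma piOne_of_sort {m : ℕ} {I : Finset ℕ} {l : List ℕ} (h : I.sort (· ≤ ·) = l) :
    piOne m I = (∑ t ∈ Finset.range l.length, (-1 : ℤ) ^ (t + 1) * (l.getD t 0)) +
      if Even l.length then 0 else (m : ℤ) := by
  unfold piOne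
  rw [← h, Finset.length_sort]

lemma piOne_one (m a : ℕ) : piOne m {a} = (m : ℤ) - a := by
  have h : ({a} : Finset ℕ).sort (· ≤ ·) = [a] :=
    sort_eq_of_sorted (by simp) (by simp)
  rw [piOne_of_sort h]
  simp [Finset.sum_range_succ, Nat.even_iff]
  ring

lemma piOne_two (m a b : ℕ) (hab : a < b) : piOne m {a, b} = (b : ℤ) - a := by
  have h : ({a, b} : Finset ℕ).sort (· ≤ ·) = [a, b] :=
    sort_eq_of_sorted (by simp [hab]) (by simp)
  rw [piOne_of_sort h]
  simp [Finset.sum_range_succ, Nat.even_iff]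
  ring

lemma piOne_three (m a b c : ℕ) (hab : a < b) (hbc : b < c) :
    piOne m {a, b, c} = (m : ℤ) - a + b - c := by
  have h : ({a, b, c} : Finset ℕ).sort (· ≤ ·) = [a, b, c] :=
    sort_eq_of_sorted (by simp [hab, hbc, hab.trans hbc]) (by simp)
  rw [piOne_of_sort h]
  simp [Finset.sum_range_succ, Nat.even_iff]
  ring

lemma piOne_four (m a b c d : ℕ) (hab : a < b) (hbc : b < c) (hcd : c < d) :
    piOne m {a, b, c, d} = (d : ℤ) - c + b - a := by
  have h : ({a, b, c, d} : Finset ℕ).sort (· ≤ ·) = [a, b, c, d] :=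
    sort_eq_of_sorted
      (by simp [hab, hbc, hcd, hab.trans hbc, hbc.trans hcd, (hab.trans hbc).trans hcd])
      (by simp)
  rw [piOne_of_sort h]
  simp [Finset.sum_range_succ, Nat.even_iff]
  ring

lemma case_two (m a : ℕ) :
    piOne m {a, a + 1} ∈ ({1, 2, (m : ℤ) - 2, (m : ℤ) - 1} : Set ℤ) := by
  simp only [Set.mem_insert_iff, Set.mem_singleton_iff]
  rw [piOne_two m a (a + 1) (by omega)]
  omega

lemma case_one1 (m : ℕ) (hm : 2 ≤ m) :
    piOne m {1} ∈ ({1, 2, (m : ℤ) - 2, (m : ℤ) - 1} : Set ℤ) := by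
  simp only [Set.mem_insert_iff, Set.mem_singleton_iff]
  rw [piOne_one m 1]
  omega

lemma case_one2 (m : ℕ) (hm : 2 ≤ m) :
    piOne m {m - 1} ∈ ({1, 2, (m : ℤ) - 2, (m : ℤ) - 1} : Set ℤ) := by
  simp only [Set.mem_insert_iff, Set.mem_singleton_iff]
  rw [piOne_one m (m - 1)]
  omega

lemma case_pair (m : ℕ) (hm : 1 < m - 1) :
    piOne m {1, m - 1} ∈ ({1, 2, (m : ℤ) - 2, (m : ℤ) - 1} : Set ℤ) := by
  simp only [Set.mem_insert_iff, Set.mem_singleton_iff]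
  rw [piOne_two m 1 (m - 1) hm]
  omega

lemma case_three1 (m a : ℕ) (h : 2 ≤ a) :
    piOne m {1, a, a + 1} ∈ ({1, 2, (m : ℤ) - 2, (m : ℤ) - 1} : Set ℤ) := by
  simp only [Set.mem_insert_iff, Set.mem_singleton_iff]
  rw [piOne_three m 1 a (a + 1) (by omega) (by omega)]
  omega

lemma case_three2 (m a : ℕ) (h2 : a + 1 < m - 1) :
    piOne m {a, a + 1, m - 1} ∈ ({1, 2, (m : ℤ) - 2, (m : ℤ) - 1} : Set ℤ) := by
  simp only [Set.mem_insert_iff, Set.mem_singleton_iff]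
  rw [piOne_three m a (a + 1) (m - 1) (by omega) h2]
  omega

lemma case_four (m a b : ℕ) (h1 : a + 2 ≤ b) :
    piOne m {a, a + 1, b, b + 1} ∈ ({1, 2, (m : ℤ) - 2, (m : ℤ) - 1} : Set ℤ) := by
  simp only [Set.mem_insert_iff, Set.mem_singleton_iff]
  rw [piOne_four m a (a + 1) b (b + 1) (by omega) (by omega) (by omega)]
  omega

end Aux

/-- Let `Y` be the graph on `{0, …, m-1}` (`m ≥ 2`) consisting of the
path `1 - 2 - ⋯ - (m-1)` and the edges `{0, i_t}` for `1 ≤ i_1 < ⋯ < i_ℓ ≤ m-1`, with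
value `π₁`. If `Y` is isomorphic to the line graph of some finite simple connected graph
`X`, then `π₁ ∈ {1, 2, m-2, m-1}`. -/
theorem piOne_of_lineGraph (m : ℕ) (hm : 2 ≤ m) (I : Finset ℕ)
    (hI : ∀ i ∈ I, 1 ≤ i ∧ i ≤ m - 1) (hne : I.Nonempty)
    {W : Type*} [Fintype W] (X : SimpleGraph W) (hX : X.Connected)
    (hiso : Nonempty (Ygraph m I ≃g SimpleGraph.lineGraph X)) :
    piOne m I ∈ ({1, 2, (m : ℤ) - 2, (m : ℤ) - 1} : Set ℤ) := by
  classical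
  obtain ⟨φ⟩ := hiso
  have hmpos : 0 < m := by omega
  set e : ℕ → Sym2 W := fun i =>
    if h : i < m then ((φ ⟨i, h⟩ : X.edgeSet) : Sym2 W)
    else ((φ ⟨0, hmpos⟩ : X.edgeSet) : Sym2 W) with he
  have hedef : ∀ i (h : i < m), e i = ((φ ⟨i, h⟩ : X.edgeSet) : Sym2 W) := by
    intro i h
    simp [he, dif_pos h]
  have inj : ∀ i j, i < m → j < m → e i = e j → i = j := by
    intro i j hi hj hij
    rw [hedef i hi, hedef j hj] at hij
    have h2 := φ.injective (Subtype.ext hij)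
    exact congrArg Fin.val h2
  have master : ∀ i j, (hi : i < m) → (hj : j < m) → i ≠ j →
      ((∃ v, v ∈ e i ∧ v ∈ e j) ↔
        (i + 1 = j ∧ 1 ≤ i) ∨ (j + 1 = i ∧ 1 ≤ j) ∨ (i = 0 ∧ j ∈ I ∧ 1 ≤ j)
          ∨ (j = 0 ∧ i ∈ I ∧ 1 ≤ i)) := by
    intro i j hi hj hij
    have hneq : (φ ⟨i, hi⟩) ≠ (φ ⟨j, hj⟩) := by
      intro h
      exact hij (congrArg Fin.val (φ.injective h))
    have h1 : (SimpleGraph.lineGraph X).Adj (φ ⟨i, hi⟩) (φ ⟨j, hj⟩) ↔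
        (Ygraph m I).Adj ⟨i, hi⟩ ⟨j, hj⟩ := φ.map_adj_iff
    rw [SimpleGraph.lineGraph_adj_iff_exists] at h1
    have h2 : (Ygraph m I).Adj ⟨i, hi⟩ ⟨j, hj⟩ ↔
        ((i + 1 = j ∧ 1 ≤ i) ∨ (j + 1 = i ∧ 1 ≤ j) ∨ (i = 0 ∧ j ∈ I ∧ 1 ≤ j)
          ∨ (j = 0 ∧ i ∈ I ∧ 1 ≤ i)) := Iff.rfl
    rw [← h2, ← h1, hedef i hi, hedef j hj]
    exact ⟨fun hv => ⟨hneq, hv⟩, fun hv => hv.2⟩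
  obtain ⟨x, y, hxy0⟩ : ∃ x y, e 0 = s(x, y) := by
    obtain ⟨⟨x, y⟩, h⟩ := Quot.exists_rep (e 0)
    exact ⟨x, y, h.symm⟩
  have h0edge : e 0 ∈ X.edgeSet := by
    rw [hedef 0 hmpos]
    exact (φ ⟨0, hmpos⟩).2
  have hxyne : x ≠ y := by
    rw [hxy0] at h0edge
    exact (SimpleGraph.mem_edgeSet X).mp h0edge |>.ne
  have mem0 : ∀ v, v ∈ e 0 ↔ v = x ∨ v = y := by
    intro v
    rw [hxy0, Sym2.mem_iff]
  have memI : ∀ i, i ∈ I → x ∈ e i ∨ y ∈ e i := by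
    intro i hi
    obtain ⟨hi1, hi2⟩ := hI i hi
    have him : i < m := by omega
    obtain ⟨v, hv0, hvi⟩ := (master 0 i hmpos him (by omega)).mpr
      (Or.inr (Or.inr (Or.inl ⟨rfl, hi, hi1⟩)))
    rcases (mem0 v).mp hv0 with rfl | rfl
    · exact Or.inl hvi
    · exact Or.inr hvi
  have memI' : ∀ i, 1 ≤ i → i ≤ m - 1 → (x ∈ e i ∨ y ∈ e i) → i ∈ I := by
    intro i hi1 hi2 hsh
    have him : i < m := by omega
    have hsh' : ∃ v, v ∈ e 0 ∧ v ∈ e i := by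
      rcases hsh with h | h
      · exact ⟨x, (mem0 x).mpr (Or.inl rfl), h⟩
      · exact ⟨y, (mem0 y).mpr (Or.inr rfl), h⟩
    rcases (master 0 i hmpos him (by omega)).mp hsh' with h | h | h | h
    · omega
    · omega
    · exact h.2.1
    · omega
  have consec : ∀ (u : W) i j, 1 ≤ i → i < j → j ≤ m - 1 → u ∈ e i → u ∈ e j →
      j = i + 1 := by
    intro u i j hi1 hij hj2 hui huj
    rcases (master i j (by omega) (by omega) (by omega)).mp ⟨u, hui, huj⟩
      with h | h | h | h <;> omega
  have pathshare : ∀ i, 1 ≤ i → i + 1 ≤ m - 1 → ∃ v, v ∈ e i ∧ v ∈ e (i + 1) := by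
    intro i hi1 hi2
    exact (master i (i + 1) (by omega) (by omega) (by omega)).mpr
      (Or.inl ⟨rfl, hi1⟩)
  have notboth : ∀ i, 1 ≤ i → i < m → ¬(x ∈ e i ∧ y ∈ e i) := by
    intro i hi1 him ⟨hx', hy'⟩
    have h1 : e i = s(x, y) := (Sym2.mem_and_mem_iff hxyne).mp ⟨hx', hy'⟩
    have h2 : e i = e 0 := by rw [h1, hxy0]
    have := inj i 0 him hmpos h2
    omega
  have shape : ∀ u : W, (u = x ∨ u = y) →
      ∀ S : Finset ℕ, S = I.filter (fun i => u ∈ e i) →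
      S = ∅ ∨ (∃ a, 1 ≤ a ∧ a + 1 ≤ m - 1 ∧ S = {a, a + 1}) ∨ S = {1} ∨ S = {m - 1} := by
    intro u hu S hS
    have hmemS : ∀ i, i ∈ S ↔ (i ∈ I ∧ u ∈ e i) := by
      intro i
      rw [hS, Finset.mem_filter]
    by_cases hSe : S = ∅
    · exact Or.inl hSe
    right
    have hSne : S.Nonempty := Finset.nonempty_iff_ne_empty.mpr hSe
    set a := S.min' hSne with hadef
    set b := S.max' hSne with hbdef
    have haS : a ∈ S := S.min'_mem hSne
    have hbS : b ∈ S := S.max'_mem hSne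
    have haI := (hmemS a).mp haS
    have hbI := (hmemS b).mp hbS
    have hIa := hI a haI.1
    have hIb := hI b hbI.1
    rcases eq_or_lt_of_le (S.min'_le b hbS) with hab | hab
    · -- singleton case
      have hsingle : S = {a} := by
        ext i
        rw [hmemS i, Finset.mem_singleton]
        constructor
        · intro hi
          have h1 := S.min'_le i ((hmemS i).mpr hi)
          have h2 := S.le_max' i ((hmemS i).mpr hi)
          omega
        · intro hi
          subst hi
          exact haI
      by_cases h2 : 2 ≤ a ∧ a ≤ m - 2
      · exfalso
        obtain ⟨p, hp1, hp2⟩ := pathshare (a - 1) (by omega) (by omega)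
        obtain ⟨q, hq1, hq2⟩ := pathshare a (by omega) (by omega)
        have ha' : a - 1 + 1 = a := by omega
        rw [ha'] at hp2
        have hpq : p ≠ q := by
          intro h
          subst h
          have := consec p (a - 1) (a + 1) (by omega) (by omega) (by omega) hp1 hq2
          omega
        have hea : e a = s(p, q) := (Sym2.mem_and_mem_iff hpq).mp ⟨hp2, hq1⟩
        have hua : u ∈ e a := haI.2
        rw [hea, Sym2.mem_iff] at hua
        have hmemnbr : ∀ k, 1 ≤ k → k ≤ m - 1 → u ∈ e k → k ∈ S := by
          intro k hk1 hk2 huk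
          refine (hmemS k).mpr ⟨memI' k hk1 hk2 ?_, huk⟩
          rcases hu with rfl | rfl
          · exact Or.inl huk
          · exact Or.inr huk
        rcases hua with rfl | rfl
        · have : a - 1 ∈ S := hmemnbr (a - 1) (by omega) (by omega) hp1
          rw [hsingle, Finset.mem_singleton] at this
          omega
        · have : a + 1 ∈ S := hmemnbr (a + 1) (by omega) (by omega) hq2
          rw [hsingle, Finset.mem_singleton] at this
          omega
      · have : a = 1 ∨ a = m - 1 := by omega
        rcases this with h1 | h1
        · rw [h1] at hsingle
          exact Or.inr (Or.inl hsingle)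
        · rw [h1] at hsingle
          exact Or.inr (Or.inr hsingle)
    · -- two-element case
      have hb : b = a + 1 := consec u a b (by omega) hab (by omega) haI.2 hbI.2
      left
      refine ⟨a, by omega, by omega, ?_⟩
      ext i
      rw [hmemS i]
      simp only [Finset.mem_insert, Finset.mem_singleton]
      constructor
      · intro hi
        have h1 := S.min'_le i ((hmemS i).mpr hi)
        have h2 := S.le_max' i ((hmemS i).mpr hi)
        omega
      · intro hi
        rcases hi with rfl | rfl
        · exact haI
        · rw [← hb]
          exact hbI
  have hSx := shape x (Or.inl rfl) (I.filter (fun i => x ∈ e i)) rfl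
  have hSy := shape y (Or.inr rfl) (I.filter (fun i => y ∈ e i)) rfl
  have hunion : I = I.filter (fun i => x ∈ e i) ∪ I.filter (fun i => y ∈ e i) := by
    ext i
    simp only [Finset.mem_union, Finset.mem_filter]
    constructor
    · intro hi
      rcases memI i hi with h | h
      · exact Or.inl ⟨hi, h⟩
      · exact Or.inr ⟨hi, h⟩
    · rintro (⟨hi, _⟩ | ⟨hi, _⟩) <;> exact hi
  have hdisj : ∀ i, i ∈ I.filter (fun i => x ∈ e i) →
      i ∈ I.filter (fun i => y ∈ e i) → False := by
    intro i h1 h2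
    rw [Finset.mem_filter] at h1 h2
    have hr := hI i h1.1
    exact notboth i hr.1 (by omega) ⟨h1.2, h2.2⟩
  rcases hSx with hx1 | ⟨a, ha1, ha2, hx1⟩ | hx1 | hx1 <;>
    rcases hSy with hy1 | ⟨b, hb1, hb2, hy1⟩ | hy1 | hy1 <;>
    rw [hx1, hy1] at hunion hdisj
  · -- ∅ ∅
    simp only [Finset.empty_union] at hunion
    exact absurd hunion (Finset.nonempty_iff_ne_empty.mp hne)
  · -- ∅ {b,b+1}
    rw [Finset.empty_union] at hunion
    rw [hunion]; exact case_two m b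
  · -- ∅ {1}
    rw [Finset.empty_union] at hunion
    rw [hunion]; exact case_one1 m hm
  · -- ∅ {m-1}
    rw [Finset.empty_union] at hunion
    rw [hunion]; exact case_one2 m hm
  · -- {a,a+1} ∅
    rw [Finset.union_empty] at hunion
    rw [hunion]; exact case_two m a
  · -- {a,a+1} {b,b+1}
    have hab : a ≠ b := by
      intro h
      exact hdisj a (by simp) (by simp [h.symm])
    have hab1 : a + 1 ≠ b := by
      intro h
      exact hdisj (a + 1) (by simp) (by simp [h.symm])
    have hab2 : a ≠ b + 1 := by
      intro h
      exact hdisj a (by simp) (by simp [h.symm])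
    rcases lt_trichotomy a b with h | h | h
    · have hIeq : I = {a, a + 1, b, b + 1} := by
        rw [hunion]; ext i; simp only [Finset.mem_union, Finset.mem_insert, Finset.mem_singleton]; try tauto
      rw [hIeq]; exact case_four m a b (by omega)
    · omega
    · have hIeq : I = {b, b + 1, a, a + 1} := by
        rw [hunion]; ext i; simp only [Finset.mem_union, Finset.mem_insert, Finset.mem_singleton]; try tauto
      rw [hIeq]; exact case_four m b a (by omega)
  · -- {a,a+1} {1}
    have h1a : 1 ≠ a ∧ 1 ≠ a + 1 := by
      constructor <;> intro h <;> exact hdisj 1 (by simp [h.symm]) (by simp)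
    have hIeq : I = {1, a, a + 1} := by
      rw [hunion]; ext i; simp only [Finset.mem_union, Finset.mem_insert, Finset.mem_singleton]; try tauto
    rw [hIeq]; exact case_three1 m a (by omega)
  · -- {a,a+1} {m-1}
    have h1a : m - 1 ≠ a ∧ m - 1 ≠ a + 1 := by
      constructor <;> intro h <;> exact hdisj (m - 1) (by simp [h.symm]) (by simp)
    have hIeq : I = {a, a + 1, m - 1} := by
      rw [hunion]; ext i; simp only [Finset.mem_union, Finset.mem_insert, Finset.mem_singleton]; try tauto
    rw [hIeq]; exact case_three2 m a (by omega)
  · -- {1} ∅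
    rw [Finset.union_empty] at hunion
    rw [hunion]; exact case_one1 m hm
  · -- {1} {b,b+1}
    have h1a : 1 ≠ b ∧ 1 ≠ b + 1 := by
      constructor <;> intro h <;> exact hdisj 1 (by simp) (by simp [h.symm])
    have hIeq : I = {1, b, b + 1} := by
      rw [hunion]; ext i; simp only [Finset.mem_union, Finset.mem_insert, Finset.mem_singleton]; try tauto
    rw [hIeq]; exact case_three1 m b (by omega)
  · -- {1} {1}
    exact (hdisj 1 (by simp) (by simp)).elim
  · -- {1} {m-1}
    have h1m : 1 ≠ m - 1 := by
      intro h
      exact hdisj 1 (by simp) (by simp [h.symm])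
    have hIeq : I = {1, m - 1} := by
      rw [hunion]; ext i; simp only [Finset.mem_union, Finset.mem_insert, Finset.mem_singleton]; try tauto
    rw [hIeq]; exact case_pair m (by omega)
  · -- {m-1} ∅
    rw [Finset.union_empty] at hunion
    rw [hunion]; exact case_one2 m hm
  · -- {m-1} {b,b+1}
    have h1a : m - 1 ≠ b ∧ m - 1 ≠ b + 1 := by
      constructor <;> intro h <;> exact hdisj (m - 1) (by simp) (by simp [h.symm])
    have hIeq : I = {b, b + 1, m - 1} := by
      rw [hunion]; ext i; simp only [Finset.mem_union, Finset.mem_insert, Finset.mem_singleton]; try tauto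
    rw [hIeq]; exact case_three2 m b (by omega)
  · -- {m-1} {1}
    have h1m : 1 ≠ m - 1 := by
      intro h
      exact hdisj 1 (by simp [h.symm]) (by simp)
    have hIeq : I = {1, m - 1} := by
      rw [hunion]; ext i; simp only [Finset.mem_union, Finset.mem_insert, Finset.mem_singleton]; try tauto
    rw [hIeq]; exact case_pair m (by omega)
  · -- {m-1} {m-1}
    exact (hdisj (m - 1) (by simp) (by simp)).elim
end
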